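/- Let n ∈ ℕ and L ⊆ ℕ infinite. Then for every m < n and every G ∈ S_m, the sum ∑_{k ∈ G} a_n^L(k) < 3 / (min L). -/

import Mathlib

/-- The first Schreier family: finite sets `F` with `|F| ≤ min F`. -/
def SchreierOne : Set (Finset ℕ) := {F | ∀ k ∈ F, F.card ≤ k}

/-- The minimum of a finite set of naturals (0 for the empty set). -/
noncomputable def finMin (F : Finset ℕ) : ℕ := sInf {k | k ∈ F}

/-- The convolution `P[Q]` of two families of finite subsets of ℕ:
unions of successive members of `Q` whose minima form a set in `P`. -/
def conv (P Q : Set (Finset ℕ)) : Set (Finset ℕ) :=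
  {U | ∃ (d : ℕ) (F : Fin d → Finset ℕ),
    (∀ i, F i ∈ Q) ∧ (∀ i, (F i).Nonempty) ∧
    (∀ i j : Fin d, i < j → ∀ a ∈ F i, ∀ b ∈ F j, a < b) ∧
    (Finset.univ.image fun i => finMin (F i)) ∈ P ∧
    U = Finset.univ.biUnion F}

/-- The modified convolution `P[Q]_M`: unions of pairwise disjoint members of `Q`
whose minima form a set in `P`. -/
def mconv (P Q : Set (Finset ℕ)) : Set (Finset ℕ) :=
  {U | ∃ (d : ℕ) (F : Fin d → Finset ℕ),
    (∀ i, F i ∈ Q) ∧ (∀ i, (F i).Nonempty) ∧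
    (∀ i j : Fin d, i ≠ j → Disjoint (F i) (F j)) ∧
    (Finset.univ.image fun i => finMin (F i)) ∈ P ∧
    U = Finset.univ.biUnion F}

/-- The Schreier families `S_n` (indexed so that `Schreier 1 = S_1`,
`Schreier (n+1) = S_1[S_n]`). -/
def Schreier : ℕ → Set (Finset ℕ)
  | 0 => {F | F.card ≤ 1}
  | 1 => SchreierOne
  | (n+2) => conv SchreierOne (Schreier (n+1))

/-- The modified Schreier families `S^M_n`. -/
def SchreierM : ℕ → Set (Finset ℕ)
  | 0 => {F | F.card ≤ 1}
  | 1 => SchreierOne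
  | (n+2) => mconv SchreierOne (SchreierM (n+1))

/-- The repeated averages `a_n^L ∈ c_00` for an (infinite) set `L ⊆ ℕ`:
`a_0^L = e_{min L}`, and `a_{n+1}^L = (1/l_1)(a_n^{L_1} + ... + a_n^{L_{l_1}})`
where `l_1 = min L`, `L_1 = L` and `L_{k+1} = L_k \ supp a_n^{L_k}`. -/
noncomputable def ra : ℕ → Set ℕ → (ℕ →₀ ℝ) := fun n =>
  Nat.rec (motive := fun _ => Set ℕ → (ℕ →₀ ℝ))
    (fun L => Finsupp.single (sInf L) 1)
    (fun _ prev L =>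
      (((sInf L : ℕ) : ℝ))⁻¹ •
        ∑ k ∈ Finset.range (sInf L),
          prev (Nat.rec (motive := fun _ => Set ℕ) L
            (fun _ M => M \ ↑(prev M).support) k))
    n


def LSeq (n : ℕ) (L : Set ℕ) : ℕ → Set ℕ :=
  Nat.rec L (fun _ M => M \ ↑(ra n M).support)

lemma ra_zero (L : Set ℕ) : ra 0 L = Finsupp.single (sInf L) 1 := rfl

lemma ra_succ (n : ℕ) (L : Set ℕ) :
    ra (n+1) L = (((sInf L : ℕ) : ℝ))⁻¹ •
      ∑ k ∈ Finset.range (sInf L), ra n (LSeq n L k) := rfl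

lemma LSeq_zero (n : ℕ) (L : Set ℕ) : LSeq n L 0 = L := rfl

lemma LSeq_succ (n : ℕ) (L : Set ℕ) (k : ℕ) :
    LSeq n L (k+1) = LSeq n L k \ ↑(ra n (LSeq n L k)).support := rfl

def Good (L : Set ℕ) : Prop := L.Infinite ∧ 0 ∉ L

lemma Good.nonempty {L : Set ℕ} (h : Good L) : L.Nonempty := h.1.nonempty

lemma Good.sInf_mem {L : Set ℕ} (h : Good L) : sInf L ∈ L := Nat.sInf_mem h.nonempty

lemma Good.sInf_pos {L : Set ℕ} (h : Good L) : 0 < sInf L := by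
  rcases Nat.eq_zero_or_pos (sInf L) with h0 | h0
  · exact absurd (h0 ▸ h.sInf_mem) h.2
  · exact h0

lemma Good.LSeq {L : Set ℕ} (h : Good L) (n k : ℕ) : Good (LSeq n L k) := by
  induction k with
  | zero => exact h
  | succ k ih =>
    rw [LSeq_succ]
    exact ⟨ih.1.diff (Finset.finite_toSet _),
      fun hx => ih.2 hx.1⟩

lemma LSeq_subset_self {L : Set ℕ} (n : ℕ) : ∀ k, LSeq n L k ⊆ L := by
  intro k
  induction k with
  | zero => rfl
  | succ k ih => rw [LSeq_succ]; exact (Set.diff_subset).trans ih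

lemma LSeq_mono {L : Set ℕ} (n : ℕ) {k k' : ℕ} (h : k ≤ k') : LSeq n L k' ⊆ LSeq n L k := by
  induction k' with
  | zero => rw [Nat.le_zero.mp h]
  | succ k' ih =>
    rcases Nat.lt_or_ge k (k'+1) with h1 | h1
    · rw [LSeq_succ]
      exact (Set.diff_subset).trans (ih (Nat.lt_succ_iff.mp h1))
    · rw [Nat.le_antisymm h h1]

lemma ra_nonneg : ∀ (n : ℕ) (L : Set ℕ) (k : ℕ), 0 ≤ ra n L k := by
  intro n
  induction n with
  | zero =>
    intro L k
    rw [ra_zero, Finsupp.single_apply]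
    split <;> norm_num
  | succ n ih =>
    intro L k
    rw [ra_succ, Finsupp.smul_apply, Finsupp.finset_sum_apply]
    exact mul_nonneg (by positivity) (Finset.sum_nonneg fun i _ => ih _ k)

lemma ra_support_subset {n : ℕ} : ∀ {L : Set ℕ}, Good L → ∀ {k : ℕ}, ra n L k ≠ 0 → k ∈ L := by
  induction n with
  | zero =>
    intro L hL k h
    rw [ra_zero, Finsupp.single_apply] at h
    split at h
    · next heq => exact heq ▸ hL.sInf_mem
    · exact absurd rfl h
  | succ n ih =>
    intro L hL k h
    rw [ra_succ, Finsupp.smul_apply, Finsupp.finset_sum_apply] at h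
    have : ∃ i ∈ Finset.range (sInf L), ra n (LSeq n L i) k ≠ 0 := by
      by_contra hc
      push_neg at hc
      simp [Finset.sum_eq_zero hc] at h
    obtain ⟨i, _, hi⟩ := this
    exact LSeq_subset_self n i (ih (hL.LSeq n i) hi)

lemma ra_mem_of_support {n : ℕ} {L : Set ℕ} (hL : Good L) {k : ℕ}
    (h : k ∈ (ra n L).support) : k ∈ L :=
  ra_support_subset hL (Finsupp.mem_support_iff.mp h)
lemma ra_support_succ {n : ℕ} {L : Set ℕ} (hL : Good L) :
    (ra (n+1) L).support =
      (Finset.range (sInf L)).biUnion (fun i => (ra n (LSeq n L i)).support) := by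
  ext k
  simp only [Finsupp.mem_support_iff, Finset.mem_biUnion, Finset.mem_range]
  rw [ra_succ, Finsupp.smul_apply, Finsupp.finset_sum_apply]
  constructor
  · intro h
    by_contra hc
    push_neg at hc
    have : ∀ i ∈ Finset.range (sInf L), ra n (LSeq n L i) k = 0 := by
      intro i hi
      exact hc i (Finset.mem_range.mp hi)
    simp [Finset.sum_eq_zero this] at h
  · rintro ⟨i, hi, hne⟩
    have hpos : 0 < ra n (LSeq n L i) k := lt_of_le_of_ne (ra_nonneg n _ k) (Ne.symm hne)
    have hsum : 0 < ∑ j ∈ Finset.range (sInf L), ra n (LSeq n L j) k := by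
      have := Finset.single_le_sum (f := fun j => ra n (LSeq n L j) k)
        (fun j _ => ra_nonneg n _ k) (Finset.mem_range.mpr hi)
      linarith
    have hc : (0:ℝ) < (((sInf L : ℕ)):ℝ)⁻¹ := by
      have := hL.sInf_pos
      positivity
    positivity

lemma ra_total {n : ℕ} {L : Set ℕ} (hL : Good L) :
    ∀ {S : Finset ℕ}, (ra n L).support ⊆ S → ∑ k ∈ S, ra n L k = 1 := by
  induction n generalizing L with
  | zero =>
    intro S hS
    have hmem : sInf L ∈ S := by
      apply hS
      rw [ra_zero]
      simp [Finsupp.support_single_ne_zero]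
    rw [ra_zero]
    rw [Finset.sum_congr rfl (fun k _ => Finsupp.single_apply)]
    rw [Finset.sum_ite_eq S (sInf L) (fun _ => (1:ℝ))]
    simp [hmem]
  | succ n ih =>
    intro S hS
    rw [ra_succ]
    simp only [Finsupp.smul_apply, Finsupp.finset_sum_apply, smul_eq_mul]
    rw [← Finset.mul_sum, Finset.sum_comm]
    have : ∀ i ∈ Finset.range (sInf L), ∑ k ∈ S, ra n (LSeq n L i) k = 1 := by
      intro i hi
      apply ih (hL.LSeq n i)
      intro k hk
      apply hS
      rw [ra_support_succ hL]
      exact Finset.mem_biUnion.mpr ⟨i, hi, hk⟩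
    rw [Finset.sum_congr rfl this]
    simp only [Finset.sum_const, Finset.card_range, nsmul_eq_mul, mul_one]
    have hpos : (0:ℝ) < ((sInf L : ℕ) : ℝ) := by exact_mod_cast hL.sInf_pos
    field_simp

lemma ra_sum_le_one {n : ℕ} {L : Set ℕ} (hL : Good L) (G : Finset ℕ) :
    ∑ k ∈ G, ra n L k ≤ 1 := by
  have h1 : ∑ k ∈ G ∪ (ra n L).support, ra n L k = 1 :=
    ra_total hL Finset.subset_union_right
  rw [← h1]
  exact Finset.sum_le_sum_of_subset_of_nonneg Finset.subset_union_left
    (fun k _ _ => ra_nonneg n L k)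

lemma ra_coord_le_one {n : ℕ} {L : Set ℕ} (hL : Good L) (k : ℕ) : ra n L k ≤ 1 := by
  have h := ra_sum_le_one (n := n) hL {k}
  simpa using h

lemma ra_support_nonempty {n : ℕ} {L : Set ℕ} (hL : Good L) :
    (ra n L).support.Nonempty := by
  by_contra h
  rw [Finset.not_nonempty_iff_eq_empty] at h
  have := ra_total hL (S := (ra n L).support) (by rfl)
  rw [h] at this
  simp at this

/-- Initial segment property: any element of `L` outside the support dominates the support. -/
lemma ra_initseg {n : ℕ} : ∀ {L : Set ℕ}, Good L → ∀ {x : ℕ}, x ∈ L → ra n L x = 0 →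
    ∀ {y : ℕ}, y ∈ (ra n L).support → y < x := by
  induction n with
  | zero =>
    intro L hL x hx h0 y hy
    rw [ra_zero] at h0 hy
    rw [Finsupp.support_single_ne_zero _ (by norm_num)] at hy
    rw [Finset.mem_singleton] at hy
    subst hy
    rw [Finsupp.single_apply] at h0
    rcases lt_or_eq_of_le (Nat.sInf_le hx) with h | h
    · exact h
    · simp [h] at h0
  | succ n ih =>
    intro L hL x hx h0 y hy
    rw [ra_succ, Finsupp.smul_apply, Finsupp.finset_sum_apply, smul_eq_mul] at h0
    have hc : (((sInf L : ℕ)):ℝ)⁻¹ ≠ 0 := by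
      have := hL.sInf_pos; positivity
    have hsum : ∑ i ∈ Finset.range (sInf L), ra n (LSeq n L i) x = 0 := by
      rcases mul_eq_zero.mp h0 with h | h
      · exact absurd h hc
      · exact h
    have hall : ∀ i ∈ Finset.range (sInf L), ra n (LSeq n L i) x = 0 :=
      (Finset.sum_eq_zero_iff_of_nonneg (fun i _ => ra_nonneg n _ x)).mp hsum
    rw [ra_support_succ hL] at hy
    obtain ⟨i, hi, hyi⟩ := Finset.mem_biUnion.mp hy
    have hxL : ∀ j, j ≤ i → x ∈ LSeq n L j := by
      intro j
      induction j with
      | zero => intro _; exact hx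
      | succ j ihj =>
        intro hj
        rw [LSeq_succ]
        refine ⟨ihj (by omega), ?_⟩
        intro hmem
        have : ra n (LSeq n L j) x ≠ 0 := by
          simpa [Finsupp.mem_support_iff] using hmem
        exact this (hall j (Finset.mem_range.mpr (by
          have := Finset.mem_range.mp hi; omega)))
    exact ih (hL.LSeq n i) (hxL i le_rfl)
      (Finsupp.notMem_support_iff.mp (fun hc' => (by
        have : ra n (LSeq n L i) x ≠ 0 := Finsupp.mem_support_iff.mp hc'
        exact this (hall i hi)))) hyi

/-- Elements of distinct blocks are ordered. -/
lemma ra_blocks_lt {n : ℕ} {L : Set ℕ} (hL : Good L) {i i' : ℕ} (hii : i < i')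
    {y y' : ℕ} (hy : y ∈ (ra n (LSeq n L i)).support)
    (hy' : y' ∈ (ra n (LSeq n L i')).support) : y < y' := by
  have hsub : LSeq n L i' ⊆ LSeq n L (i+1) := LSeq_mono n hii
  have hy'mem : y' ∈ LSeq n L (i+1) := hsub (ra_mem_of_support (hL.LSeq n i') hy')
  rw [LSeq_succ] at hy'mem
  obtain ⟨hy'i, hy'ns⟩ := hy'mem
  have h0 : ra n (LSeq n L i) y' = 0 := by
    by_contra hc
    exact hy'ns (Finsupp.mem_support_iff.mpr hc)
  exact ra_initseg (hL.LSeq n i) hy'i h0 hy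

lemma ra_coord_le_inv {n : ℕ} {L : Set ℕ} (hL : Good L) (k : ℕ) :
    ra (n+1) L k ≤ (((sInf L : ℕ)):ℝ)⁻¹ := by
  rw [ra_succ, Finsupp.smul_apply, Finsupp.finset_sum_apply, smul_eq_mul]
  have hinv : (0:ℝ) ≤ (((sInf L : ℕ)):ℝ)⁻¹ := by positivity
  have hsum : ∑ i ∈ Finset.range (sInf L), ra n (LSeq n L i) k ≤ 1 := by
    by_cases hex : ∃ i ∈ Finset.range (sInf L), ra n (LSeq n L i) k ≠ 0
    · obtain ⟨i₀, hi₀, hne⟩ := hex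
      have heq : ∑ i ∈ Finset.range (sInf L), ra n (LSeq n L i) k = ra n (LSeq n L i₀) k := by
        apply Finset.sum_eq_single_of_mem i₀ hi₀
        intro i hi hne'
        by_contra hc
        have hk1 : k ∈ (ra n (LSeq n L i)).support := Finsupp.mem_support_iff.mpr hc
        have hk2 : k ∈ (ra n (LSeq n L i₀)).support := Finsupp.mem_support_iff.mpr hne
        rcases Nat.lt_or_ge i i₀ with h | h
        · exact lt_irrefl k (ra_blocks_lt hL h hk1 hk2)
        · have h' : i₀ < i := by omega
          exact lt_irrefl k (ra_blocks_lt hL h' hk2 hk1)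
      rw [heq]
      exact ra_coord_le_one (hL.LSeq n i₀) k
    · push_neg at hex
      rw [Finset.sum_eq_zero hex]
      norm_num
  calc (((sInf L : ℕ)):ℝ)⁻¹ * ∑ i ∈ Finset.range (sInf L), ra n (LSeq n L i) k
      ≤ (((sInf L : ℕ)):ℝ)⁻¹ * 1 := by
        apply mul_le_mul_of_nonneg_left hsum hinv
    _ = _ := by ring

/-- The support of `ra (n+1) L` has at least `sInf L` elements. -/
lemma ra_card_ge {n : ℕ} {L : Set ℕ} (hL : Good L) :
    sInf L ≤ (ra (n+1) L).support.card := by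
  classical
  have hmap : ∀ i ∈ Finset.range (sInf L),
      ((ra n (LSeq n L i)).support.min' (ra_support_nonempty (hL.LSeq n i))) ∈
        (ra (n+1) L).support := by
    intro i hi
    rw [ra_support_succ hL]
    exact Finset.mem_biUnion.mpr ⟨i, hi, Finset.min'_mem _ _⟩
  have hinj : Set.InjOn
      (fun i => ((ra n (LSeq n L i)).support.min' (ra_support_nonempty (hL.LSeq n i))))
      (Finset.range (sInf L)) := by
    intro i hi i' hi' heq
    dsimp only at heq
    by_contra hne
    rcases Nat.lt_or_ge i i' with h | h
    · have hlt := ra_blocks_lt hL h (Finset.min'_mem _ (ra_support_nonempty (hL.LSeq n i)))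
        (Finset.min'_mem _ (ra_support_nonempty (hL.LSeq n i')))
      exact absurd heq (ne_of_lt hlt)
    · have h' : i' < i := by omega
      have hlt := ra_blocks_lt hL h' (Finset.min'_mem _ (ra_support_nonempty (hL.LSeq n i')))
        (Finset.min'_mem _ (ra_support_nonempty (hL.LSeq n i)))
      exact absurd heq.symm (ne_of_lt hlt)
  calc sInf L = (Finset.range (sInf L)).card := (Finset.card_range _).symm
    _ ≤ (ra (n+1) L).support.card := Finset.card_le_card_of_injOn _ hmap hinj

/-- The minima of the sets `LSeq` at least double at each step (for `n ≥ 1`). -/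
lemma LSeq_sInf_double {n : ℕ} {L : Set ℕ} (hL : Good L) (i : ℕ) :
    2 * sInf (LSeq (n+1) L i) ≤ sInf (LSeq (n+1) L (i+1)) := by
  set M := LSeq (n+1) L i with hM
  have hMg : Good M := hL.LSeq (n+1) i
  set B := (ra (n+1) M).support with hB
  have hcard : sInf M ≤ B.card := ra_card_ge hMg
  have hM1g : Good (LSeq (n+1) L (i+1)) := hL.LSeq (n+1) (i+1)
  set x := sInf (LSeq (n+1) L (i+1)) with hx
  have hxmem : x ∈ LSeq (n+1) L (i+1) := hM1g.sInf_mem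
  rw [LSeq_succ] at hxmem
  obtain ⟨hxM, hxB⟩ := hxmem
  have hlt : ∀ y ∈ B, y < x := by
    intro y hy
    apply ra_initseg hMg hxM _ hy
    by_contra hc
    exact hxB (Finsupp.mem_support_iff.mpr hc)
  have hge : ∀ y ∈ B, sInf M ≤ y := by
    intro y hy
    exact Nat.sInf_le (ra_mem_of_support hMg hy)
  have hsub : B ⊆ Finset.Ico (sInf M) x := by
    intro y hy
    exact Finset.mem_Ico.mpr ⟨hge y hy, hlt y hy⟩
  have := Finset.card_le_card hsub
  rw [Nat.card_Ico] at this
  omega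
lemma finMin_mem {F : Finset ℕ} (h : F.Nonempty) : finMin F ∈ F := by
  obtain ⟨a, ha⟩ := h
  exact Nat.sInf_mem (⟨a, ha⟩ : Set.Nonempty {k | k ∈ F})

lemma finMin_le {F : Finset ℕ} {b : ℕ} (h : b ∈ F) : finMin F ≤ b := Nat.sInf_le h

/-- Decomposition of a nonempty Schreier-(m+1) set into at most `min G` successive
Schreier-m pieces. -/
lemma schreier_decomp {m : ℕ} {G : Finset ℕ} (hG : G ∈ Schreier (m+1)) (hne : G.Nonempty) :
    ∃ (d : ℕ) (Gp : Fin d → Finset ℕ),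
      0 < d ∧ d ≤ G.min' hne ∧
      (∀ j, Gp j ∈ Schreier m) ∧ (∀ j, (Gp j).Nonempty) ∧
      (∀ j j' : Fin d, j < j' → ∀ a ∈ Gp j, ∀ b ∈ Gp j', a < b) ∧
      G = Finset.univ.biUnion Gp := by
  cases m with
  | zero =>
    -- G ∈ SchreierOne; pieces are singletons
    have hG1 : ∀ k ∈ G, G.card ≤ k := hG
    set d := G.card with hd
    have hdpos : 0 < d := Finset.card_pos.mpr hne
    set e := G.orderIsoOfFin rfl with he
    refine ⟨d, fun j => {(e j : ℕ)}, hdpos, hG1 _ (G.min'_mem hne), ?_, ?_, ?_, ?_⟩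
    · intro j; simp [Schreier]
    · intro j; exact ⟨_, Finset.mem_singleton_self _⟩
    · intro j j' hjj a ha b hb
      rw [Finset.mem_singleton] at ha hb
      subst ha; subst hb
      exact_mod_cast e.strictMono hjj
    · ext a
      simp only [Finset.mem_biUnion, Finset.mem_univ, true_and, Finset.mem_singleton]
      constructor
      · intro ha
        obtain ⟨j, hj⟩ := e.surjective ⟨a, ha⟩
        exact ⟨j, by rw [hj]⟩
      · rintro ⟨j, rfl⟩
        exact (e j).2
  | succ m =>
    obtain ⟨d, F, hQ, hne', hord, hmin, hU⟩ := hG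
    have hdpos : 0 < d := by
      rcases Nat.eq_zero_or_pos d with h | h
      · subst h
        rw [hU] at hne
        simp [Finset.biUnion_empty] at hne
      · exact h
    have hminj : Function.Injective (fun j : Fin d => finMin (F j)) := by
      intro j j' heq
      dsimp only at heq
      by_contra hne2
      rcases lt_or_gt_of_ne hne2 with h | h
      · exact absurd heq (ne_of_lt (hord j j' h _ (finMin_mem (hne' j)) _ (finMin_mem (hne' j'))))
      · exact absurd heq.symm (ne_of_lt (hord j' j h _ (finMin_mem (hne' j')) _ (finMin_mem (hne' j))))
    have hcard : (Finset.univ.image fun j : Fin d => finMin (F j)).card = d := by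
      rw [Finset.card_image_of_injective _ hminj, Finset.card_univ, Fintype.card_fin]
    have hf0 : finMin (F ⟨0, hdpos⟩) ≤ G.min' hne := by
      have hmem : G.min' hne ∈ G := G.min'_mem hne
      have hmem2 : G.min' hne ∈ Finset.univ.biUnion F := hU ▸ hmem
      obtain ⟨j, _, hj⟩ := Finset.mem_biUnion.mp hmem2
      rcases Nat.eq_zero_or_pos (j : ℕ) with hj0 | hj0
      · have hj' : j = ⟨0, hdpos⟩ := by
          apply Fin.ext; exact hj0
        rw [hj'] at hj
        exact finMin_le hj
      · have hlt : (⟨0, hdpos⟩ : Fin d) < j := by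
          rw [Fin.lt_def]; exact hj0
        exact le_of_lt (hord _ _ hlt _ (finMin_mem (hne' _)) _ hj)
    have hd_le : d ≤ G.min' hne := by
      have hmem0 : finMin (F ⟨0, hdpos⟩) ∈ Finset.univ.image fun j : Fin d => finMin (F j) :=
        Finset.mem_image.mpr ⟨⟨0, hdpos⟩, Finset.mem_univ _, rfl⟩
      have h2 := hmin _ hmem0
      rw [hcard] at h2
      exact h2.trans hf0
    exact ⟨d, F, hdpos, hd_le, hQ, hne', hord, hU⟩
/-- Staircase counting: summing `|J i| - 1` over active blocks is at most `d - 1`. -/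
lemma staircase {d : ℕ} (Gp : Fin d → Finset ℕ)
    (hord : ∀ j j' : Fin d, j < j' → ∀ a ∈ Gp j, ∀ b ∈ Gp j', a < b)
    (B : ℕ → Finset ℕ) {l : ℕ}
    (hB : ∀ i i' : ℕ, i < i' → i' < l → ∀ a ∈ B i, ∀ b ∈ B i', a < b)
    (A : Finset ℕ) (hA : A ⊆ Finset.range l)
    (J : ℕ → Finset (Fin d))
    (hJ : ∀ i, J i = Finset.univ.filter (fun j => ((Gp j) ∩ B i).Nonempty))
    (hAne : ∀ i ∈ A, (J i).Nonempty) (hAnonempty : A.Nonempty) :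
    ∑ i ∈ A, ((J i).card - 1) ≤ d - 1 := by
  classical
  set E : ℕ → Finset (Fin d) := fun i => (J i).filter (fun j => ∃ j' ∈ J i, j' < j) with hE
  -- key: a non-minimal member of J i' cannot meet an earlier block
  have hkey : ∀ i i' : ℕ, i < i' → i' < l → ∀ j : Fin d,
      j ∈ J i → j ∈ E i' → False := by
    intro i i' hii hi'l j hji hjE
    rw [hE] at hjE
    obtain ⟨hji', j', hj'i', hj'lt⟩ := Finset.mem_filter.mp hjE
    rw [hJ] at hji hj'i'
    obtain ⟨b, hb⟩ := (Finset.mem_filter.mp hji).2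
    obtain ⟨a, ha⟩ := (Finset.mem_filter.mp hj'i').2
    rw [Finset.mem_inter] at ha hb
    have h1 : a < b := hord _ _ hj'lt _ ha.1 _ hb.1
    have h2 : b < a := hB i i' hii hi'l _ hb.2 _ ha.2
    omega
  have hcardE : ∀ i ∈ A, (E i).card = (J i).card - 1 := by
    intro i hi
    have hne := hAne i hi
    have : E i = (J i).erase ((J i).min' hne) := by
      ext j
      rw [hE, Finset.mem_filter, Finset.mem_erase]
      constructor
      · rintro ⟨hj, j', hj', hlt⟩
        refine ⟨?_, hj⟩
        intro heq
        have h2 := Finset.min'_le _ _ hj'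
        rw [← heq] at h2
        exact absurd hlt (not_lt.mpr h2)
      · rintro ⟨hne', hj⟩
        exact ⟨hj, (J i).min' hne, Finset.min'_mem _ _,
          lt_of_le_of_ne (Finset.min'_le _ _ hj) (Ne.symm hne')⟩
    rw [this, Finset.card_erase_of_mem (Finset.min'_mem _ _)]
  rw [Finset.sum_congr rfl (fun i hi => (hcardE i hi).symm)]
  -- E i are pairwise disjoint
  have hdisj : ∀ i ∈ A, ∀ i' ∈ A, i ≠ i' → Disjoint (E i) (E i') := by
    intro i hi i' hi' hne
    rw [Finset.disjoint_left]
    intro j hj hj'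
    rcases Nat.lt_or_ge i i' with h | h
    · exact hkey i i' h (Finset.mem_range.mp (hA hi')) j (Finset.mem_of_mem_filter _ hj) hj'
    · have h' : i' < i := by omega
      exact hkey i' i h' (Finset.mem_range.mp (hA hi)) j (Finset.mem_of_mem_filter _ hj') hj
  rw [← Finset.card_biUnion hdisj]
  -- the union avoids the minimal piece of the minimal active block
  set i₀ := A.min' hAnonempty with hi₀
  have hi₀A : i₀ ∈ A := A.min'_mem hAnonempty
  set j₀ := (J i₀).min' (hAne _ hi₀A) with hj₀
  have hsub : A.biUnion E ⊆ Finset.univ.erase j₀ := by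
    intro j hj
    obtain ⟨i, hiA, hjE⟩ := Finset.mem_biUnion.mp hj
    rw [Finset.mem_erase]
    refine ⟨?_, Finset.mem_univ _⟩
    intro heq
    rw [heq] at hjE
    rcases Nat.lt_or_ge i₀ i with h | h
    · exact hkey i₀ i h (Finset.mem_range.mp (hA hiA)) j₀ (Finset.min'_mem _ _) hjE
    · have : i = i₀ := le_antisymm h (Finset.min'_le _ _ hiA)
      subst this
      rw [hE, Finset.mem_filter] at hjE
      obtain ⟨_, j', hj', hlt⟩ := hjE
      have h3 := Finset.min'_le _ _ hj'
      rw [← hj₀] at h3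
      exact absurd hlt (not_lt.mpr h3)
  calc (A.biUnion E).card ≤ (Finset.univ.erase j₀).card := Finset.card_le_card hsub
    _ = d - 1 := by rw [Finset.card_erase_of_mem (Finset.mem_univ _), Finset.card_univ,
        Fintype.card_fin]
/-- Per-term pricing bound for tail blocks. -/
lemma term_tail {P c mR : ℝ} {j r : ℕ} (hP : 6 ≤ P) (hr : 1 ≤ r) (hj : 1 ≤ j)
    (hm : 2^(r-1) * P ≤ mR) (hc1 : c ≤ 1) (hcj : c ≤ 3 * j / mR) :
    c ≤ (if r = 1 then 1/2 + 3/(2*P) else 3/(2^(r-1) * P)) + 3/(2*P) * ((j:ℝ) - 1) := by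
  have hP0 : (0:ℝ) < P := by linarith
  have hq1 : (1:ℝ) ≤ 2^(r-1) := one_le_pow₀ (by norm_num)
  have hm0 : (0:ℝ) < mR := lt_of_lt_of_le (by nlinarith) hm
  have hj1 : (1:ℝ) ≤ (j:ℝ) := by exact_mod_cast hj
  have hcj' : c ≤ 3 * j / (2^(r-1) * P) := by
    calc c ≤ 3 * j / mR := hcj
      _ ≤ 3 * j / (2^(r-1) * P) := by
        apply div_le_div_of_nonneg_left (by positivity) (by nlinarith) hm
  rcases Nat.eq_or_lt_of_le hr with hr1 | hr2
  · -- r = 1 : chord bound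
    rw [if_pos hr1.symm]
    rw [← hr1] at hcj'
    norm_num at hcj'
    have hgoal : c ≤ 1/2 + 3 * (j:ℝ)/(2*P) := by
      rcases le_or_gt (3 * (j:ℝ)) P with h | h
      · have h5 : 3 * (j:ℝ)/P = 3 * (j:ℝ)/(2*P) + 3 * (j:ℝ)/(2*P) := by
          field_simp
          ring
        have h6 : 3 * (j:ℝ)/(2*P) ≤ 1/2 := by
          rw [div_le_iff₀ (by linarith)]
          linarith
        calc c ≤ 3 * (j:ℝ)/P := hcj'
          _ = 3 * (j:ℝ)/(2*P) + 3 * (j:ℝ)/(2*P) := h5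
          _ ≤ 1/2 + 3 * (j:ℝ)/(2*P) := by linarith
      · have h6 : (1:ℝ)/2 ≤ 3 * (j:ℝ)/(2*P) := by
          rw [le_div_iff₀ (by linarith)]
          linarith
        calc c ≤ 1 := hc1
          _ ≤ 1/2 + 3 * (j:ℝ)/(2*P) := by linarith
    calc c ≤ 1/2 + 3 * (j:ℝ)/(2*P) := hgoal
      _ = 1/2 + 3/(2*P) + 3/(2*P) * ((j:ℝ) - 1) := by
        field_simp
        ring
  · -- r ≥ 2
    have hrne : r ≠ 1 := by omega
    rw [if_neg hrne]
    have hq2 : (2:ℝ) ≤ 2^(r-1) := by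
      calc (2:ℝ) = 2^1 := (pow_one 2).symm
        _ ≤ 2^(r-1) := pow_le_pow_right₀ (by norm_num) (by omega)
    rcases le_or_gt (3 * (j:ℝ)) (2^(r-1) * P) with h | h
    · have step : 3 * ((j:ℝ)-1) / (2^(r-1)*P) ≤ 3/(2*P) * ((j:ℝ) - 1) := by
        have e1 : 3/(2*P) * ((j:ℝ) - 1) = 3 * ((j:ℝ)-1) / (2*P) := by ring
        rw [e1]
        apply div_le_div_of_nonneg_left (by nlinarith) (by positivity) (by nlinarith)
      calc c ≤ 3 * j / (2^(r-1) * P) := hcj'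
        _ = 3/(2^(r-1)*P) + 3 * ((j:ℝ)-1) / (2^(r-1)*P) := by
          field_simp
          ring
        _ ≤ 3/(2^(r-1)*P) + 3/(2*P) * ((j:ℝ) - 1) := by linarith
    · -- capped case : c ≤ 1 ≤ RHS
      have hjlb : 2^(r-1) * P / 3 < (j:ℝ) := by
        rw [div_lt_iff₀ (by norm_num)]
        linarith
      have key : 3/(2*P) * ((j:ℝ) - 1) > 3/(2*P) * (2^(r-1) * P / 3 - 1) :=
        mul_lt_mul_of_pos_left (by linarith) (by positivity)
      have expand : 3/(2*P) * ((2:ℝ)^(r-1) * P / 3 - 1) = 2^(r-1)/2 - 3/(2*P) := by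
        field_simp
      rw [expand] at key
      have hrhs : (1:ℝ) ≤ 3/(2^(r-1)*P) + 3/(2*P) * ((j:ℝ) - 1) := by
        rcases eq_or_lt_of_le hq2 with hq2e | hq2l
        · have e2 : 3/((2:ℝ)^(r-1)*P) = 3/(2*P) := by rw [← hq2e]
          rw [e2]
          rw [← hq2e] at key
          linarith
        · have hq4 : (4:ℝ) ≤ 2^(r-1) := by
            have hle : 2 ≤ r - 1 := by
              by_contra hc
              push_neg at hc
              have : r - 1 ≤ 1 := by omega
              have : (2:ℝ)^(r-1) ≤ 2^1 := pow_le_pow_right₀ (by norm_num) this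
              simp at this
              linarith
            calc (4:ℝ) = 2^2 := by norm_num
              _ ≤ 2^(r-1) := pow_le_pow_right₀ (by norm_num) hle
          have hP' : 3/(2*P) ≤ 1/4 := by
            rw [div_le_iff₀ (by linarith)]
            linarith
          have h2 : (0:ℝ) ≤ 3/(2^(r-1)*P) := by positivity
          nlinarith
      linarith

/-- Geometric bound on the sum of pricing constants. -/
lemma geom_const {P : ℝ} (hP : 0 < P) (t' : ℕ) :
    ∑ r ∈ Finset.Icc 1 t', (if r = 1 then 1/2 + 3/(2*P) else 3/((2:ℝ)^(r-1) * P)) ≤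
      1/2 + 3/(2*P) + (3/P) * (1 - (1/2:ℝ)^(t'-1)) := by
  induction t' with
  | zero =>
    have he : Finset.Icc 1 0 = (∅ : Finset ℕ) := by simp
    rw [he]
    simp only [Finset.sum_empty, Nat.zero_sub, pow_zero]
    have : (0:ℝ) ≤ 3/(2*P) := by positivity
    norm_num
    linarith
  | succ t ih =>
    rw [Finset.sum_Icc_succ_top (by omega : 1 ≤ t + 1)]
    rcases Nat.eq_zero_or_pos t with ht | ht
    · subst ht
      norm_num
    · have htne : t + 1 ≠ 1 := by omega
      rw [if_neg htne]
      have hincr : 3/((2:ℝ)^(t+1-1) * P) = (3/P) * ((1/2:ℝ)^(t-1) - (1/2:ℝ)^((t+1)-1)) := by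
        have ht1 : t - 1 + 1 = t := by omega
        have h1 : ((1/2:ℝ))^((t+1)-1) = (1/2:ℝ)^(t-1) * (1/2) := by
          have he : (t+1) - 1 = (t-1) + 1 := by omega
          rw [he, pow_succ]
        rw [h1]
        have h2 : ((2:ℝ))^(t+1-1) = 2^t := by norm_num
        rw [h2]
        have h3 : ((1/2:ℝ))^(t-1) = 1/(2:ℝ)^(t-1) := by
          rw [div_pow, one_pow]
        rw [h3]
        have h4 : ((2:ℝ))^t = 2^(t-1) * 2 := by
          rw [← pow_succ, ht1]
        rw [h4]
        have hpne : ((2:ℝ))^(t-1) ≠ 0 := by positivity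
        field_simp
        ring
      rw [hincr]
      linarith [ih]
set_option maxHeartbeats 2000000 in
theorem aux_main : ∀ (m n : ℕ), m < n → ∀ (L : Set ℕ), Good L →
    ∀ G ∈ Schreier m, (∑ k ∈ G, ra n L k) < 3 / ((sInf L : ℕ) : ℝ) := by
  intro m
  induction m using Nat.strong_induction_on with
  | _ m IH =>
    cases m with
    | zero =>
      intro n hn L hL G hG
      have hl1 : 0 < sInf L := hL.sInf_pos
      have hlR : (0:ℝ) < ((sInf L : ℕ) : ℝ) := by exact_mod_cast hl1
      obtain ⟨n', rfl⟩ : ∃ n', n = n' + 1 := ⟨n - 1, by omega⟩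
      have hG0 : G.card ≤ 1 := hG
      rcases Nat.le_one_iff_eq_zero_or_eq_one.mp hG0 with h | h
      · rw [Finset.card_eq_zero.mp h]
        simp only [Finset.sum_empty]
        positivity
      · obtain ⟨a, rfl⟩ := Finset.card_eq_one.mp h
        rw [Finset.sum_singleton]
        calc ra (n'+1) L a ≤ (((sInf L : ℕ)):ℝ)⁻¹ := ra_coord_le_inv hL a
          _ = 1 / ((sInf L : ℕ):ℝ) := by rw [inv_eq_one_div]
          _ < 3 / ((sInf L : ℕ):ℝ) := by
            apply div_lt_div_of_pos_right _ hlR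
            norm_num
    | succ m' =>
      intro n hmn L hL G hG
      have hl1 : 0 < sInf L := hL.sInf_pos
      have hlR : (0:ℝ) < ((sInf L : ℕ) : ℝ) := by exact_mod_cast hl1
      by_cases hGne : G.Nonempty
      swap
      · rw [Finset.not_nonempty_iff_eq_empty] at hGne
        subst hGne
        simp only [Finset.sum_empty]
        positivity
      by_cases hl2 : sInf L < 3
      · have h1 : ∑ k ∈ G, ra n L k ≤ 1 := ra_sum_le_one hL G
        have h2 : ((sInf L : ℕ):ℝ) ≤ 2 := by exact_mod_cast (by omega : sInf L ≤ 2)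
        have h3 : (1:ℝ) < 3 / ((sInf L : ℕ):ℝ) := by
          rw [lt_div_iff₀ hlR]
          linarith
        linarith
      push_neg at hl2
      have hl2R : (3:ℝ) ≤ ((sInf L : ℕ):ℝ) := by exact_mod_cast hl2
      obtain ⟨n2, rfl⟩ : ∃ n2, n = n2 + 2 := ⟨n - 2, by omega⟩
      classical
      -- reduction to block sums
      have hred : ∑ k ∈ G, ra (n2+2) L k =
          (((sInf L : ℕ)):ℝ)⁻¹ * ∑ i ∈ Finset.range (sInf L),
            ∑ k ∈ G, ra (n2+1) (LSeq (n2+1) L i) k := by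
        have hpt : ∀ k, ra (n2+2) L k = (((sInf L : ℕ)):ℝ)⁻¹ *
            ∑ i ∈ Finset.range (sInf L), ra (n2+1) (LSeq (n2+1) L i) k := by
          intro k
          rw [show n2 + 2 = (n2+1) + 1 from rfl, ra_succ]
          rw [Finsupp.smul_apply, Finsupp.finset_sum_apply, smul_eq_mul]
        rw [Finset.sum_congr rfl (fun k _ => hpt k), ← Finset.mul_sum, Finset.sum_comm]
      rw [hred]
      have hgoal : ∀ X : ℝ, X < 3 → (((sInf L : ℕ)):ℝ)⁻¹ * X < 3 / ((sInf L : ℕ):ℝ) := by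
        intro X hX
        rw [div_eq_mul_inv, mul_comm (3:ℝ)]
        exact mul_lt_mul_of_pos_left hX (inv_pos.mpr hlR)
      apply hgoal
      -- decompose G into Schreier-m' pieces
      obtain ⟨d, Gp, hdpos, hdle, hGpS, hGpne, hGpord, hGU⟩ := schreier_decomp hG hGne
      set J : ℕ → Finset (Fin d) := fun i =>
        Finset.univ.filter (fun j => ((Gp j) ∩ (ra (n2+1) (LSeq (n2+1) L i)).support).Nonempty)
        with hJdef
      set A : Finset ℕ := (Finset.range (sInf L)).filter (fun i => (J i).Nonempty) with hAdef
      have hgoodM : ∀ i, Good (LSeq (n2+1) L i) := fun i => hL.LSeq (n2+1) i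
      -- c i = 0 off A
      have hczero : ∀ i ∈ Finset.range (sInf L), i ∉ A →
          ∑ k ∈ G, ra (n2+1) (LSeq (n2+1) L i) k = 0 := by
        intro i hi hiA
        have hJe : ¬ (J i).Nonempty := by
          intro h
          exact hiA (by rw [hAdef]; exact Finset.mem_filter.mpr ⟨hi, h⟩)
        apply Finset.sum_eq_zero
        intro k hk
        by_contra hne
        have hksupp : k ∈ (ra (n2+1) (LSeq (n2+1) L i)).support := Finsupp.mem_support_iff.mpr hne
        rw [hGU] at hk
        obtain ⟨j, _, hkj⟩ := Finset.mem_biUnion.mp hk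
        exact hJe ⟨j, by
          rw [hJdef]
          exact Finset.mem_filter.mpr ⟨Finset.mem_univ _,
            ⟨k, Finset.mem_inter.mpr ⟨hkj, hksupp⟩⟩⟩⟩
      have hsplit : ∑ i ∈ Finset.range (sInf L), ∑ k ∈ G, ra (n2+1) (LSeq (n2+1) L i) k =
          ∑ i ∈ A, ∑ k ∈ G, ra (n2+1) (LSeq (n2+1) L i) k := by
        rw [hAdef]
        exact (Finset.sum_subset (Finset.filter_subset _ _)
          (fun i hi hiA => hczero i hi (by rw [hAdef]; exact hiA))).symm
      rw [hsplit]
      by_cases hAne : A.Nonempty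
      swap
      · rw [Finset.not_nonempty_iff_eq_empty] at hAne
        rw [hAne]
        simp only [Finset.sum_empty]
        norm_num
      -- ======== core argument ========
      set i₀ := A.min' hAne with hi₀def
      have hi₀A : i₀ ∈ A := A.min'_mem hAne
      have hJA : ∀ i ∈ A, (J i).Nonempty := by
        intro i hi
        rw [hAdef] at hi
        exact (Finset.mem_filter.mp hi).2
      have hAsub : A ⊆ Finset.range (sInf L) := by
        rw [hAdef]; exact Finset.filter_subset _ _
      -- block ordering
      have hBord : ∀ i i' : ℕ, i < i' → i' < sInf L →
          ∀ a ∈ (ra (n2+1) (LSeq (n2+1) L i)).support,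
          ∀ b ∈ (ra (n2+1) (LSeq (n2+1) L i')).support, a < b :=
        fun i i' h _ a ha b hb => ra_blocks_lt hL h ha hb
      have hbudget : ∑ i ∈ A, ((J i).card - 1) ≤ d - 1 :=
        staircase Gp hGpord _ hBord A hAsub J (fun _ => by rw [hJdef]) hJA hAne
      -- minima chain facts
      have hdouble : ∀ i, 2 * sInf (LSeq (n2+1) L i) ≤ sInf (LSeq (n2+1) L (i+1)) :=
        fun i => LSeq_sInf_double hL i
      have hmono2 : ∀ i r, 2^r * sInf (LSeq (n2+1) L i) ≤ sInf (LSeq (n2+1) L (i + r)) := by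
        intro i r
        induction r with
        | zero => simp
        | succ r ih =>
          have h1 := hdouble (i + r)
          have h2 : 2^(r+1) * sInf (LSeq (n2+1) L i) = 2 * (2^r * sInf (LSeq (n2+1) L i)) := by
            ring
          have h3 : i + (r+1) = (i + r) + 1 := by omega
          rw [h2, h3]
          omega
      have hl_le : ∀ i, sInf L ≤ sInf (LSeq (n2+1) L i) := by
        intro i
        have h1 := hmono2 0 i
        rw [Nat.zero_add] at h1
        have h2 : sInf (LSeq (n2+1) L 0) = sInf L := rfl
        rw [h2] at h1
        have h3 : (1:ℕ) ≤ 2^i := Nat.one_le_two_pow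
        nlinarith
      -- the K bound
      set D := G.min' hGne with hDdef
      have hdleD : d ≤ D := hdle
      have hKb : D + 1 ≤ sInf (LSeq (n2+1) L (i₀ + 1)) := by
        obtain ⟨j, hj⟩ := hJA i₀ hi₀A
        rw [hJdef] at hj
        obtain ⟨g, hg⟩ := (Finset.mem_filter.mp hj).2
        rw [Finset.mem_inter] at hg
        have hgG : g ∈ G := by
          rw [hGU]; exact Finset.mem_biUnion.mpr ⟨j, Finset.mem_univ _, hg.1⟩
        have hDg : D ≤ g := Finset.min'_le _ _ hgG
        have hx : sInf (LSeq (n2+1) L (i₀+1)) ∈ LSeq (n2+1) L (i₀+1) :=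
          (hL.LSeq (n2+1) (i₀+1)).sInf_mem
        rw [LSeq_succ] at hx
        have hglt : g < sInf (LSeq (n2+1) L (i₀+1)) := by
          apply ra_initseg (hL.LSeq (n2+1) i₀) hx.1 _ hg.2
          by_contra hc
          exact hx.2 (Finsupp.mem_support_iff.mpr hc)
        omega
      -- real-valued scales
      have hm₀3 : (3:ℝ) ≤ ((sInf (LSeq (n2+1) L i₀) : ℕ) : ℝ) := by
        exact_mod_cast le_trans hl2 (hl_le i₀)
      set P : ℝ := max ((D:ℝ) + 1) (2 * ((sInf (LSeq (n2+1) L i₀) : ℕ) : ℝ)) with hPdef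
      have hP6 : (6:ℝ) ≤ P := le_trans (by linarith) (le_max_right _ _)
      have hP0 : (0:ℝ) < P := by linarith
      have hKP : ((D:ℝ) + 1) ≤ P := le_max_left _ _
      have hmr_tail : ∀ i ∈ A, i ≠ i₀ →
          (2:ℝ)^(i - i₀ - 1) * P ≤ ((sInf (LSeq (n2+1) L i) : ℕ) : ℝ) := by
        intro i hiA hne
        have hi₀lt : i₀ < i := lt_of_le_of_ne (Finset.min'_le _ _ hiA) (Ne.symm hne)
        have hr1 : 1 ≤ i - i₀ := by omega
        have hir : i = (i₀ + 1) + (i - i₀ - 1) := by omega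
        have hb1 : 2^(i - i₀ - 1) * (D + 1) ≤ sInf (LSeq (n2+1) L i) := by
          have h1 := hmono2 (i₀+1) (i - i₀ - 1)
          rw [← hir] at h1
          calc 2^(i-i₀-1) * (D+1) ≤ 2^(i-i₀-1) * sInf (LSeq (n2+1) L (i₀+1)) :=
              Nat.mul_le_mul_left _ hKb
            _ ≤ _ := h1
        have hb2 : 2^(i - i₀) * sInf (LSeq (n2+1) L i₀) ≤ sInf (LSeq (n2+1) L i) := by
          have h1 := hmono2 i₀ (i - i₀)
          have h2 : i₀ + (i - i₀) = i := by omega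
          rw [h2] at h1
          exact h1
        rcases max_cases ((D:ℝ)+1) (2 * ((sInf (LSeq (n2+1) L i₀) : ℕ) : ℝ)) with
          ⟨hmax, _⟩ | ⟨hmax, _⟩ <;> rw [hPdef, hmax]
        · have hcast : ((2^(i-i₀-1) * (D+1) : ℕ) : ℝ) ≤ ((sInf (LSeq (n2+1) L i) : ℕ) : ℝ) := by
            exact_mod_cast hb1
          push_cast at hcast
          linarith
        · have hcast : ((2^(i-i₀) * sInf (LSeq (n2+1) L i₀) : ℕ) : ℝ) ≤
              ((sInf (LSeq (n2+1) L i) : ℕ) : ℝ) := by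
            exact_mod_cast hb2
          push_cast at hcast
          have he : (2:ℝ)^(i-i₀-1) * 2 = 2^(i-i₀) := by
            rw [← pow_succ]
            congr 1
            omega
          have he2 : (2:ℝ)^(i-i₀-1) * (2 * ((sInf (LSeq (n2+1) L i₀) : ℕ) : ℝ)) =
              2^(i-i₀) * ((sInf (LSeq (n2+1) L i₀) : ℕ) : ℝ) := by
            rw [← he]
            ring
          rw [he2]
          linarith
      -- bounds on block sums
      have hcle1 : ∀ i, ∑ k ∈ G, ra (n2+1) (LSeq (n2+1) L i) k ≤ 1 :=
        fun i => ra_sum_le_one (hL.LSeq (n2+1) i) G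
      have hpdisj : (↑(Finset.univ : Finset (Fin d)) : Set (Fin d)).PairwiseDisjoint Gp := by
        intro x _ y _ hxy
        rw [Function.onFun, Finset.disjoint_left]
        intro a hax hay
        rcases lt_or_gt_of_ne hxy with h | h
        · exact lt_irrefl a (hGpord x y h a hax a hay)
        · exact lt_irrefl a (hGpord y x h a hay a hax)
      have hclt : ∀ i ∈ A, ∑ k ∈ G, ra (n2+1) (LSeq (n2+1) L i) k <
          3 * ((J i).card : ℝ) / ((sInf (LSeq (n2+1) L i) : ℕ) : ℝ) := by
        intro i hiA
        have hmipos : (0:ℝ) < ((sInf (LSeq (n2+1) L i) : ℕ) : ℝ) := by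
          have h1 := hl_le i
          have : (0:ℕ) < sInf (LSeq (n2+1) L i) := by omega
          exact_mod_cast this
        have hsum1 : ∑ k ∈ G, ra (n2+1) (LSeq (n2+1) L i) k =
            ∑ j : Fin d, ∑ k ∈ Gp j, ra (n2+1) (LSeq (n2+1) L i) k := by
          rw [hGU]
          exact Finset.sum_biUnion hpdisj
        have hsum2 : ∑ j : Fin d, ∑ k ∈ Gp j, ra (n2+1) (LSeq (n2+1) L i) k =
            ∑ j ∈ J i, ∑ k ∈ Gp j, ra (n2+1) (LSeq (n2+1) L i) k := by
          rw [hJdef]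
          apply (Finset.sum_subset (Finset.filter_subset _ _) _).symm
          intro j _ hj
          rw [Finset.mem_filter] at hj
          push_neg at hj
          have hje : ¬ ((Gp j) ∩ (ra (n2+1) (LSeq (n2+1) L i)).support).Nonempty := by
            rw [Finset.not_nonempty_iff_eq_empty]; exact hj (Finset.mem_univ j)
          apply Finset.sum_eq_zero
          intro k hk
          by_contra hne
          exact hje ⟨k, Finset.mem_inter.mpr ⟨hk, Finsupp.mem_support_iff.mpr hne⟩⟩
        have hstrict : ∑ j ∈ J i, ∑ k ∈ Gp j, ra (n2+1) (LSeq (n2+1) L i) k <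
            ∑ _j ∈ J i, 3 / ((sInf (LSeq (n2+1) L i) : ℕ) : ℝ) := by
          apply Finset.sum_lt_sum_of_nonempty (hJA i hiA)
          intro j _
          exact IH m' (Nat.lt_succ_self m') (n2+1) (by omega) _ (hL.LSeq (n2+1) i)
            (Gp j) (hGpS j)
        rw [hsum1, hsum2]
        calc ∑ j ∈ J i, ∑ k ∈ Gp j, ra (n2+1) (LSeq (n2+1) L i) k
            < ∑ _j ∈ J i, 3 / ((sInf (LSeq (n2+1) L i) : ℕ) : ℝ) := hstrict
          _ = ((J i).card : ℝ) * (3 / ((sInf (LSeq (n2+1) L i) : ℕ) : ℝ)) := by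
              rw [Finset.sum_const, nsmul_eq_mul]
          _ = 3 * ((J i).card : ℝ) / ((sInf (LSeq (n2+1) L i) : ℕ) : ℝ) := by ring
      -- real budget
      have hbudgetR : ∑ i ∈ A, (((J i).card : ℝ) - 1) ≤ (D:ℝ) - 1 := by
        have hcast : ∀ i ∈ A, (((J i).card : ℝ) - 1) = (((J i).card - 1 : ℕ) : ℝ) := by
          intro i hi
          have h1 : 1 ≤ (J i).card := Finset.card_pos.mpr (hJA i hi)
          rw [Nat.cast_sub h1, Nat.cast_one]
        rw [Finset.sum_congr rfl hcast, ← Nat.cast_sum]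
        have h2 : ∑ i ∈ A, ((J i).card - 1) ≤ D - 1 := le_trans hbudget (by omega)
        have h3 : (1:ℕ) ≤ D := by omega
        calc ((∑ i ∈ A, ((J i).card - 1) : ℕ) : ℝ) ≤ ((D - 1 : ℕ) : ℝ) := by exact_mod_cast h2
          _ = (D:ℝ) - 1 := by rw [Nat.cast_sub h3, Nat.cast_one]
      -- tail per-term bounds
      have htail : ∀ i ∈ A.erase i₀,
          ∑ k ∈ G, ra (n2+1) (LSeq (n2+1) L i) k ≤
            (if i - i₀ = 1 then 1/2 + 3/(2*P) else 3/((2:ℝ)^(i-i₀-1) * P)) +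
              3/(2*P) * (((J i).card : ℝ) - 1) := by
        intro i hi
        obtain ⟨hine, hiA⟩ := Finset.mem_erase.mp hi
        have hi₀lt : i₀ < i := lt_of_le_of_ne (Finset.min'_le _ _ hiA) (Ne.symm hine)
        exact term_tail hP6 (by omega) (Finset.card_pos.mpr (hJA i hiA))
          (hmr_tail i hiA hine) (hcle1 i) (le_of_lt (hclt i hiA))
      -- sum the tail
      rw [← Finset.add_sum_erase A _ hi₀A]
      have hsumtail : ∑ i ∈ A.erase i₀, ∑ k ∈ G, ra (n2+1) (LSeq (n2+1) L i) k ≤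
          (∑ i ∈ A.erase i₀, (if i - i₀ = 1 then 1/2 + 3/(2*P) else 3/((2:ℝ)^(i-i₀-1) * P))) +
            3/(2*P) * (∑ i ∈ A.erase i₀, (((J i).card : ℝ) - 1)) := by
        rw [Finset.mul_sum, ← Finset.sum_add_distrib]
        exact Finset.sum_le_sum htail
      -- geometric bound on constants
      set t' := sInf L - 1 - i₀ with ht'def
      have hS1 : (∑ i ∈ A.erase i₀, (if i - i₀ = 1 then 1/2 + 3/(2*P)
            else 3/((2:ℝ)^(i-i₀-1) * P))) ≤
          1/2 + 3/(2*P) + (3/P) * (1 - (1/2:ℝ)^(t'-1)) := by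
        have hreidx : (∑ i ∈ A.erase i₀, (if i - i₀ = 1 then 1/2 + 3/(2*P)
              else 3/((2:ℝ)^(i-i₀-1) * P))) =
            ∑ r ∈ (A.erase i₀).image (fun i => i - i₀),
              (if r = 1 then 1/2 + 3/(2*P) else 3/((2:ℝ)^(r-1) * P)) := by
          rw [Finset.sum_image]
          intro x hx y hy hxy
          have hx1 : i₀ < x := lt_of_le_of_ne
            (Finset.min'_le _ _ (Finset.mem_of_mem_erase hx))
            (Ne.symm (Finset.ne_of_mem_erase hx))
          have hy1 : i₀ < y := lt_of_le_of_ne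
            (Finset.min'_le _ _ (Finset.mem_of_mem_erase hy))
            (Ne.symm (Finset.ne_of_mem_erase hy))
          dsimp only at hxy
          omega
        rw [hreidx]
        calc ∑ r ∈ (A.erase i₀).image (fun i => i - i₀),
              (if r = 1 then 1/2 + 3/(2*P) else 3/((2:ℝ)^(r-1) * P))
            ≤ ∑ r ∈ Finset.Icc 1 t',
              (if r = 1 then 1/2 + 3/(2*P) else 3/((2:ℝ)^(r-1) * P)) := by
              apply Finset.sum_le_sum_of_subset_of_nonneg
              · intro r hr
                obtain ⟨i, hi, hir⟩ := Finset.mem_image.mp hr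
                have hiA := Finset.mem_of_mem_erase hi
                have hine := Finset.ne_of_mem_erase hi
                have hi₀lt : i₀ < i := lt_of_le_of_ne (Finset.min'_le _ _ hiA) (Ne.symm hine)
                have hilt : i < sInf L := Finset.mem_range.mp (hAsub hiA)
                rw [Finset.mem_Icc]
                omega
              · intro r _ _
                split
                · positivity
                · positivity
          _ ≤ _ := geom_const hP0 t'
      -- budget for the tail
      have hS2 : ∑ i ∈ A.erase i₀, (((J i).card : ℝ) - 1) ≤
          (D:ℝ) - ((J i₀).card : ℝ) := by
        have h1 : (((J i₀).card : ℝ) - 1) + ∑ i ∈ A.erase i₀, (((J i).card : ℝ) - 1) =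
            ∑ i ∈ A, (((J i).card : ℝ) - 1) :=
          Finset.add_sum_erase A (fun i => (((J i).card : ℝ) - 1)) hi₀A
        linarith [hbudgetR]
      -- assemble
      have hlam0 : (0:ℝ) ≤ 3/(2*P) := by positivity
      have hfinal2 : 3/(2*P) * (∑ i ∈ A.erase i₀, (((J i).card : ℝ) - 1)) ≤
          3/(2*P) * ((D:ℝ) - ((J i₀).card : ℝ)) :=
        mul_le_mul_of_nonneg_left hS2 hlam0
      have hDP : (D:ℝ) - ((J i₀).card : ℝ) ≤ P - 1 - ((J i₀).card : ℝ) := by linarith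
      have hfinal3 : 3/(2*P) * ((D:ℝ) - ((J i₀).card : ℝ)) ≤
          3/(2*P) * (P - 1 - ((J i₀).card : ℝ)) :=
        mul_le_mul_of_nonneg_left hDP hlam0
      have hexpand : 3/(2*P) * (P - 1 - ((J i₀).card : ℝ)) =
          3/2 - 3/(2*P) - 3/(2*P) * ((J i₀).card : ℝ) := by
        field_simp
      have hw0 : (0:ℝ) < (1/2:ℝ)^(t'-1) := by positivity
      have hw1 : ((1/2:ℝ))^(t'-1) ≤ 1 := by
        apply pow_le_one₀ <;> norm_num
      have hwexp : (3/P) * (1 - (1/2:ℝ)^(t'-1)) = 3/P - (3/P) * (1/2:ℝ)^(t'-1) := by ring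
      -- case analysis on j₀ and m₀
      have hj₀1 : 1 ≤ (J i₀).card := Finset.card_pos.mpr (hJA i₀ hi₀A)
      rcases Nat.lt_or_ge (J i₀).card 2 with hj₀case | hj₀case
      · -- j₀ = 1
        have hj₀eq : (J i₀).card = 1 := by omega
        have hci₀ : ∑ k ∈ G, ra (n2+1) (LSeq (n2+1) L i₀) k <
            3 / ((sInf (LSeq (n2+1) L i₀) : ℕ) : ℝ) := by
          have h := hclt i₀ hi₀A
          rw [hj₀eq] at h
          simpa using h
        rcases Nat.lt_or_ge (sInf (LSeq (n2+1) L i₀)) 4 with hm₀case | hm₀case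
        · -- m₀ = 3 : forces i₀ = 0 and sInf L = 3, t' = 2
          have hm₀eq : sInf (LSeq (n2+1) L i₀) = 3 := by
            have := hl_le i₀
            omega
          have hi₀0 : i₀ = 0 := by
            by_contra hc
            have h1 : 1 ≤ i₀ := by omega
            have h2 : 2 ≤ 2^i₀ := by
              calc (2:ℕ) = 2^1 := rfl
                _ ≤ 2^i₀ := Nat.pow_le_pow_right (by norm_num) h1
            have h3 := hmono2 0 i₀
            rw [Nat.zero_add] at h3
            have h4 : sInf (LSeq (n2+1) L 0) = sInf L := rfl
            rw [h4, hm₀eq] at h3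
            nlinarith
          have hleq : sInf L = 3 := by
            have h3 := hmono2 0 i₀
            rw [Nat.zero_add] at h3
            have h4 : sInf (LSeq (n2+1) L 0) = sInf L := rfl
            rw [h4, hm₀eq] at h3
            have h5 : (1:ℕ) ≤ 2^i₀ := Nat.one_le_two_pow
            nlinarith
          have ht'2 : t' = 2 := by rw [ht'def, hleq, hi₀0]
          have hweq : ((1/2:ℝ))^(t'-1) = 1/2 := by rw [ht'2]; norm_num
          have hci₀' : ∑ k ∈ G, ra (n2+1) (LSeq (n2+1) L i₀) k < 1 := by
            rw [hm₀eq] at hci₀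
            norm_num at hci₀
            exact hci₀
          rw [hweq] at hS1
          have hPe : (3/P) * (1 - (1/2:ℝ)) = 3/(2*P) := by
            field_simp
            ring
          rw [hj₀eq] at hexpand hfinal3 hfinal2
          push_cast at hexpand hfinal3 hfinal2
          nlinarith [hsumtail, hS1, hfinal2, hfinal3]
        · -- m₀ ≥ 4 : c i₀ ≤ 3/4 and P ≥ 8
          have hci₀' : ∑ k ∈ G, ra (n2+1) (LSeq (n2+1) L i₀) k ≤ 3/4 := by
            have h1 : (4:ℝ) ≤ ((sInf (LSeq (n2+1) L i₀) : ℕ) : ℝ) := by exact_mod_cast hm₀case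
            have h2 : 3 / ((sInf (LSeq (n2+1) L i₀) : ℕ) : ℝ) ≤ 3/4 := by
              apply div_le_div_of_nonneg_left (by norm_num) (by norm_num) h1
            linarith [hci₀]
          have hP8 : (8:ℝ) ≤ P := by
            have h1 : (4:ℝ) ≤ ((sInf (LSeq (n2+1) L i₀) : ℕ) : ℝ) := by exact_mod_cast hm₀case
            calc (8:ℝ) ≤ 2 * ((sInf (LSeq (n2+1) L i₀) : ℕ) : ℝ) := by linarith
              _ ≤ P := le_max_right _ _
          have h2P : 3/(2*P) ≤ 3/16 := by
            apply div_le_div_of_nonneg_left (by norm_num) (by norm_num) (by linarith)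
          have h3P : 3/P = 2 * (3/(2*P)) := by
            field_simp
          rw [hj₀eq] at hexpand hfinal3 hfinal2
          push_cast at hexpand hfinal3 hfinal2
          nlinarith [hsumtail, hS1, hfinal2, hfinal3, hw0, mul_pos (by positivity : (0:ℝ) < 3/P) hw0]
      · -- j₀ ≥ 2
        have hci₀ : ∑ k ∈ G, ra (n2+1) (LSeq (n2+1) L i₀) k ≤ 1 := hcle1 i₀
        have hj2R : (2:ℝ) ≤ ((J i₀).card : ℝ) := by exact_mod_cast hj₀case
        have hkey : 3/P ≤ 3/(2*P) * ((J i₀).card : ℝ) := by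
          have h1 : 3/(2*P) * 2 ≤ 3/(2*P) * ((J i₀).card : ℝ) :=
            mul_le_mul_of_nonneg_left hj2R hlam0
          have h2 : 3/(2*P) * 2 = 3/P := by
            field_simp
          linarith
        have hwpos : (0:ℝ) < (3/P) * (1/2:ℝ)^(t'-1) := by positivity
        nlinarith [hsumtail, hS1, hfinal2, hfinal3, hexpand, hwexp]


/-- Let `n ∈ ℕ` and `L ⊆ ℕ` infinite (with `0 ∉ L`). For every `m < n`
and every `G ∈ S_m`, the sum `∑_{k ∈ G} a_n^L(k)` is less than `3 / min L`. -/
theorem repeated_average_small_on_lower_schreier (n : ℕ) (L : Set ℕ)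
    (hL : L.Infinite) (h0 : 0 ∉ L) :
    ∀ m < n, ∀ G ∈ Schreier m, (∑ k ∈ G, ra n L k) < 3 / (((sInf L : ℕ)) : ℝ) := by
  intro m hm G hG
  exact aux_main m n hm L ⟨hL, h0⟩ G hG
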